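/- Let F : ℝ → [0, ∞) be C¹ nondecreasing with F(r*) → 0 as r* → -∞, and suppose there are C¹ functions r, μ with μ = 2/r, dr/dr* = 1 - μ, r > 2, such that (r/2)(1-μ)⁻¹ F'(r*) ≤ F(r*) + 4E for all r*, where E ≥ 0 is a constant. Then F(r*) ≤ 4 μ(r*)⁻² E for all r*. -/
import Mathlib


/-- Grönwall-type argument for the `ℓ = 0` estimate: if
`(r/2)(1-μ)⁻¹ F' ≤ F + 4E` with `μ = 2/r`, `dr/dr* = 1-μ`, `r > 2`, `F ≥ 0`
nondecreasing with `F → 0` at `-∞`, then `F ≤ 4 μ⁻² E`. -/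
theorem gronwall_ell_zero (F F' r : ℝ → ℝ) (E : ℝ) (hE : 0 ≤ E)
    (hFnonneg : ∀ s, 0 ≤ F s) (hFmono : Monotone F)
    (hF' : ∀ s, HasDerivAt F (F' s) s)
    (hFbot : Filter.Tendsto F Filter.atBot (nhds 0))
    (hr : ∀ s, 2 < r s)
    (hdr : ∀ s, HasDerivAt r (1 - 2 / r s) s)
    (hineq : ∀ s, (r s / 2) * (1 - 2 / r s)⁻¹ * F' s ≤ F s + 4 * E) :
    ∀ s, F s ≤ 4 * ((2 / r s)⁻¹) ^ 2 * E := by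
  set H : ℝ → ℝ := fun s => (F s + 4 * E) / (r s) ^ 2 with hHdef
  have hrpos : ∀ s, (0:ℝ) < r s := fun s => lt_trans (by norm_num) (hr s)
  have hr2 : ∀ s, (0:ℝ) < (r s) ^ 2 := fun s => pow_pos (hrpos s) 2
  have hH : ∀ s, HasDerivAt H
      ((F' s * (r s) ^ 2 - (F s + 4 * E) * (2 * r s ^ 1 * (1 - 2 / r s))) / ((r s) ^ 2) ^ 2) s := by
    intro s
    exact HasDerivAt.div ((hF' s).add_const _) ((hdr s).pow 2) (ne_of_gt (hr2 s))
  have hderiv_nonpos : ∀ s, deriv H s ≤ 0 := by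
    intro s
    rw [(hH s).deriv]
    apply div_nonpos_of_nonpos_of_nonneg _ (sq_nonneg _)
    have ha : 0 < 1 - 2 / r s := by
      have : 2 / r s < 1 := (div_lt_one (hrpos s)).2 (hr s)
      linarith
    have key := hineq s
    have h1 : F' s * (r s / 2) ≤ (F s + 4 * E) * (1 - 2 / r s) := by
      have hmul := mul_le_mul_of_nonneg_right key (le_of_lt ha)
      have hinv : (1 - 2 / r s)⁻¹ * (1 - 2 / r s) = 1 := inv_mul_cancel₀ (ne_of_gt ha)
      have hre : r s / 2 * (1 - 2 / r s)⁻¹ * F' s * (1 - 2 / r s)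
          = F' s * (r s / 2) * ((1 - 2 / r s)⁻¹ * (1 - 2 / r s)) := by ring
      rw [hre, hinv, mul_one] at hmul
      exact hmul
    nlinarith [hrpos s, h1]
  have hHanti : Antitone H := by
    apply antitone_of_deriv_nonpos _ hderiv_nonpos
    exact fun s => (hH s).differentiableAt
  intro s
  -- for all t ≤ s, H s ≤ (F t + 4E)/4
  have hbound : ∀ t ≤ s, H s ≤ (F t + 4 * E) / 4 := by
    intro t ht
    refine le_trans (hHanti ht) ?_
    have h4 : (4:ℝ) ≤ (r t) ^ 2 := by nlinarith [hr t]
    exact div_le_div_of_nonneg_left (by linarith [hFnonneg t, hE]) (by norm_num) h4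
  have htend : Filter.Tendsto (fun t => (F t + 4 * E) / 4) Filter.atBot (nhds E) := by
    have := ((hFbot.add_const (4 * E)).div_const 4)
    simpa using this
  have hHsE : H s ≤ E := by
    refine ge_of_tendsto htend ?_
    filter_upwards [Filter.eventually_le_atBot s] with t ht using hbound t ht
  have hFs : F s + 4 * E ≤ E * (r s) ^ 2 := by
    have := (div_le_iff₀ (hr2 s)).1 hHsE
    linarith
  have hgoal : 4 * ((2 / r s)⁻¹) ^ 2 * E = E * (r s) ^ 2 := by
    rw [inv_div]
    field_simp
    ring
  rw [hgoal]
  linarith
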